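/- If a double sequence (s_{m,n} : (m,n) ∈ ℕ²) of complex numbers converges regularly, then for each fixed m ∈ ℕ the single sequence (s_{m,n} : n ∈ ℕ) converges, for each fixed n ∈ ℕ the single sequence (s_{m,n} : m ∈ ℕ) converges, the double sequence converges in Pringsheim's sense to some s ∈ ℂ, and lim_{m→∞}(lim_{n→∞} s_{m,n}) = lim_{n→∞}(lim_{m→∞} s_{m,n}) = s. -/

import Mathlib

open Filter

/-- The "rectangular increment" of a double sequence, with the convention
`s (m-1) n := 0` when `m = 0` (and similarly in the second variable). -/
def rectIncrement (s : ℕ → ℕ → ℂ) (m M n N : ℕ) : ℂ :=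
  s M N - (if m = 0 then 0 else s (m - 1) N) - (if n = 0 then 0 else s M (n - 1)) +
    (if m = 0 ∨ n = 0 then 0 else s (m - 1) (n - 1))

/-- Key estimate: inside the quadrant past `κ`, values are `3ε`-close. -/
lemma rect_key (s : ℕ → ℕ → ℂ) (ε : ℝ) (hε : 0 < ε) (κ : ℕ)
    (hκ : ∀ m M n N : ℕ, m ≤ M → n ≤ N → κ < max m n → ‖rectIncrement s m M n N‖ < ε)
    {m n M N : ℕ} (hm : κ < m) (hn : κ < n) (hM : m ≤ M) (hN : n ≤ N) :
    ‖s M N - s m n‖ < 3 * ε := by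
  have h1 : n + 1 ≤ N → ‖s m N - s m n‖ < ε := fun h => by
    have := hκ 0 m (n + 1) N (Nat.zero_le m) h (by simpa using hn.trans_le (Nat.le_succ n))
    simpa [rectIncrement] using this
  have h2 : m + 1 ≤ M → ∀ N', ‖s M N' - s m N'‖ < ε := fun h N' => by
    have := hκ (m + 1) M 0 N' h (Nat.zero_le N') (by simp [hm.trans_le (Nat.le_succ m)])
    simpa [rectIncrement] using this
  rcases eq_or_lt_of_le hM with rfl | hM'
  · rcases eq_or_lt_of_le hN with rfl | hN'
    · simpa using by positivity
    · calc ‖s m N - s m n‖ < ε := h1 hN'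
        _ < 3 * ε := by linarith
  · rcases eq_or_lt_of_le hN with rfl | hN'
    · calc ‖s M n - s m n‖ < ε := h2 hM' n
        _ < 3 * ε := by linarith
    · have h3 : ‖rectIncrement s (m + 1) M (n + 1) N‖ < ε :=
        hκ (m + 1) M (n + 1) N hM' hN' (by simp [hm.trans_le (Nat.le_succ m), hm.le])
      have hrect : rectIncrement s (m + 1) M (n + 1) N = s M N - s m N - s M n + s m n := by
        simp [rectIncrement]
      have hid : s M N - s m n =
          (s M N - s m N - s M n + s m n) + (s m N - s m n) + (s M n - s m n) := by ring
      calc ‖s M N - s m n‖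
          ≤ ‖s M N - s m N - s M n + s m n‖ + ‖s m N - s m n‖ + ‖s M n - s m n‖ := by
            rw [hid]; exact norm_add₃_le
        _ < ε + ε + ε := by
            have e1 := h1 hN'
            have e2 := h2 hM' n
            rw [hrect] at h3
            linarith
        _ = 3 * ε := by ring

/-- If a double sequence `(s_{m,n})` of complex numbers converges regularly,
then each row sequence and each column sequence converges, the double sequence converges in
Pringsheim's sense to some `s ∈ ℂ`, and the two iterated limits both equal `s`. -/
theorem regular_convergence_of_double_sequence (s : ℕ → ℕ → ℂ)
    (hreg : ∀ ε : ℝ, 0 < ε → ∃ κ : ℕ, ∀ m M n N : ℕ, m ≤ M → n ≤ N → κ < max m n →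
      ‖rectIncrement s m M n N‖ < ε) :
    ∃ L : ℂ, ∃ r c : ℕ → ℂ,
      (∀ m : ℕ, Tendsto (fun n => s m n) atTop (nhds (r m))) ∧
      (∀ n : ℕ, Tendsto (fun m => s m n) atTop (nhds (c n))) ∧
      (∀ ε : ℝ, 0 < ε → ∃ κ : ℕ, ∀ m n : ℕ, κ < m → κ < n → ‖s m n - L‖ < ε) ∧
      Tendsto r atTop (nhds L) ∧ Tendsto c atTop (nhds L) := by
  -- rows are Cauchy
  have hrow : ∀ m, CauchySeq fun n => s m n := by
    intro m
    rw [Metric.cauchySeq_iff']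
    intro ε hε
    obtain ⟨κ, hκ⟩ := hreg ε hε
    refine ⟨κ + 1, fun N hN => ?_⟩
    rcases eq_or_lt_of_le hN with rfl | hN'
    · simpa using hε
    · have := hκ 0 m (κ + 2) N (Nat.zero_le m) hN' (by simp)
      rw [dist_eq_norm]
      simpa [rectIncrement] using this
  -- columns are Cauchy
  have hcol : ∀ n, CauchySeq fun m => s m n := by
    intro n
    rw [Metric.cauchySeq_iff']
    intro ε hε
    obtain ⟨κ, hκ⟩ := hreg ε hε
    refine ⟨κ + 1, fun M hM => ?_⟩
    rcases eq_or_lt_of_le hM with rfl | hM'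
    · simpa using hε
    · have := hκ (κ + 2) M 0 n hM' (Nat.zero_le n) (by simp)
      rw [dist_eq_norm]
      simpa [rectIncrement] using this
  -- diagonal is Cauchy
  have hdiag : CauchySeq fun k => s k k := by
    rw [Metric.cauchySeq_iff']
    intro ε hε
    have hε3 : 0 < ε / 3 := by linarith
    obtain ⟨κ, hκ⟩ := hreg (ε / 3) hε3
    refine ⟨κ + 1, fun k hk => ?_⟩
    rw [dist_eq_norm]
    have := rect_key s (ε / 3) hε3 κ hκ (m := κ + 1) (n := κ + 1)
      (Nat.lt_succ_self κ) (Nat.lt_succ_self κ) hk hk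
    linarith
  set L := limUnder atTop fun k => s k k with hL
  have hdiagL : Tendsto (fun k => s k k) atTop (nhds L) := hdiag.tendsto_limUnder
  set r : ℕ → ℂ := fun m => limUnder atTop fun n => s m n with hr
  set c : ℕ → ℂ := fun n => limUnder atTop fun m => s m n with hc
  have hrlim : ∀ m, Tendsto (fun n => s m n) atTop (nhds (r m)) :=
    fun m => (hrow m).tendsto_limUnder
  have hclim : ∀ n, Tendsto (fun m => s m n) atTop (nhds (c n)) :=
    fun n => (hcol n).tendsto_limUnder
  -- Pringsheim convergence with bound ≤ 3ε'
  have hP : ∀ ε : ℝ, 0 < ε → ∃ κ : ℕ, ∀ m n : ℕ, κ < m → κ < n → ‖s m n - L‖ < ε := by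
    intro ε hε
    have hε6 : 0 < ε / 6 := by linarith
    obtain ⟨κ, hκ⟩ := hreg (ε / 6) hε6
    refine ⟨κ, fun m n hm hn => ?_⟩
    have hle : ‖L - s m n‖ ≤ 3 * (ε / 6) := by
      refine le_of_tendsto ((hdiagL.sub tendsto_const_nhds).norm) ?_
      filter_upwards [eventually_ge_atTop (max m n)] with k hk
      exact le_of_lt (rect_key s (ε / 6) hε6 κ hκ hm hn
        (le_trans (le_max_left m n) hk) (le_trans (le_max_right m n) hk))
    calc ‖s m n - L‖ = ‖L - s m n‖ := by rw [norm_sub_rev]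
      _ ≤ 3 * (ε / 6) := hle
      _ < ε := by linarith
  refine ⟨L, r, c, hrlim, hclim, hP, ?_, ?_⟩
  · rw [Metric.tendsto_atTop]
    intro ε hε
    obtain ⟨κ, hκ⟩ := hP (ε / 2) (by linarith)
    refine ⟨κ + 1, fun m hm => ?_⟩
    rw [dist_eq_norm]
    have hle : ‖r m - L‖ ≤ ε / 2 := by
      refine le_of_tendsto (((hrlim m).sub tendsto_const_nhds).norm) ?_
      filter_upwards [eventually_ge_atTop (κ + 1)] with n hn
      exact le_of_lt (hκ m n hm hn)
    linarith
  · rw [Metric.tendsto_atTop]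
    intro ε hε
    obtain ⟨κ, hκ⟩ := hP (ε / 2) (by linarith)
    refine ⟨κ + 1, fun n hn => ?_⟩
    rw [dist_eq_norm]
    have hle : ‖c n - L‖ ≤ ε / 2 := by
      refine le_of_tendsto (((hclim n).sub tendsto_const_nhds).norm) ?_
      filter_upwards [eventually_ge_atTop (κ + 1)] with m hm
      exact le_of_lt (hκ m n hm hn)
    linarith
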